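/- arXiv:2405.02176 — 3 statements merged into one kernel-verified Lean document; each statement's English description precedes it below -/
import Mathlib

section
/- For every nonempty bounded subset B of the hyperbolic disk 𝔻, there is a unique smallest closed hyperbolic disk containing B; its center P(B) satisfies: if B is contained in the hyperbolic disk of radius δ centered at 0, then the hyperbolic distance from P(B) to 0 is at most δ. -/
/-- The Poincaré hyperbolic distance between two points of the open unit disk `𝔻 ⊆ ℂ`:
`hypDist z w = 2 * artanh |(z - w)/(1 - z̄ w)|`, written via
`artanh t = (1/2) * log ((1 + t)/(1 - t))`. -/
noncomputable def hypDist (z w : ℂ) : ℝ :=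
  Real.log ((1 + ‖(z - w) / (1 - (starRingEnd ℂ) z * w)‖) /
    (1 - ‖(z - w) / (1 - (starRingEnd ℂ) z * w)‖))

/-- The radius of the smallest closed hyperbolic disk containing `B`. -/
noncomputable def minRad (B : Set ℂ) : ℝ :=
  sInf {R | 0 ≤ R ∧ ∃ c : ℂ, ‖c‖ < 1 ∧ B ⊆ {w | hypDist c w ≤ R}}

/-- cosh-distance function, rational in coordinates. -/
noncomputable def Dd (z w : ℂ) : ℝ :=
  1 + 2 * Complex.normSq (z - w) / ((1 - Complex.normSq z) * (1 - Complex.normSq w))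

lemma normSq_lt_one {z : ℂ} (hz : ‖z‖ < 1) : Complex.normSq z < 1 := by
  have := Complex.sq_norm z
  nlinarith [norm_nonneg z]

lemma key_ident (z w : ℂ) :
    Complex.normSq (1 - (starRingEnd ℂ) z * w) - Complex.normSq (z - w)
      = (1 - Complex.normSq z) * (1 - Complex.normSq w) := by
  simp [Complex.normSq_apply, Complex.sub_re, Complex.sub_im, Complex.mul_re, Complex.mul_im]
  ring

lemma denom_pos {z w : ℂ} (hz : ‖z‖ < 1) (hw : ‖w‖ < 1) :
    0 < Complex.normSq (1 - (starRingEnd ℂ) z * w) := by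
  have h := key_ident z w
  have h1 := normSq_lt_one hz
  have h2 := normSq_lt_one hw
  nlinarith [Complex.normSq_nonneg (z - w)]

lemma t_sq {z w : ℂ} (hz : ‖z‖ < 1) (hw : ‖w‖ < 1) :
    (‖(z - w) / (1 - (starRingEnd ℂ) z * w)‖)^2
      = Complex.normSq (z - w) / Complex.normSq (1 - (starRingEnd ℂ) z * w) := by
  rw [norm_div, div_pow, Complex.sq_norm, Complex.sq_norm]

lemma t_lt_one {z w : ℂ} (hz : ‖z‖ < 1) (hw : ‖w‖ < 1) :
    ‖(z - w) / (1 - (starRingEnd ℂ) z * w)‖ < 1 := by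
  have hd := denom_pos hz hw
  have h := key_ident z w
  have h1 := normSq_lt_one hz
  have h2 := normSq_lt_one hw
  have ht := t_sq hz hw
  set t := ‖(z - w) / (1 - (starRingEnd ℂ) z * w)‖ with htdef
  have ht0 : 0 ≤ t := norm_nonneg _
  have hlt : t^2 < 1 := by
    rw [ht, div_lt_one hd]; nlinarith [Complex.normSq_nonneg (z-w)]
  nlinarith

lemma hypDist_nonneg {z w : ℂ} (hz : ‖z‖ < 1) (hw : ‖w‖ < 1) :
    0 ≤ hypDist z w := by
  have ht1 := t_lt_one hz hw
  have ht0 : 0 ≤ ‖(z - w) / (1 - (starRingEnd ℂ) z * w)‖ := norm_nonneg _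
  unfold hypDist
  apply Real.log_nonneg
  rw [le_div_iff₀ (by linarith)]
  linarith

lemma cosh_hypDist {z w : ℂ} (hz : ‖z‖ < 1) (hw : ‖w‖ < 1) :
    Real.cosh (hypDist z w) = Dd z w := by
  have ht1 := t_lt_one hz hw
  have htsq := t_sq hz hw
  have hd := denom_pos hz hw
  have hk := key_ident z w
  have h1 := normSq_lt_one hz
  have h2 := normSq_lt_one hw
  have hnn := Complex.normSq_nonneg (z - w)
  set t := ‖(z - w) / (1 - (starRingEnd ℂ) z * w)‖ with htdef
  have ht0 : 0 ≤ t := norm_nonneg _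
  have hx : 0 < (1 + t) / (1 - t) := div_pos (by linarith) (by linarith)
  unfold hypDist
  rw [← htdef, Real.cosh_eq, Real.exp_log hx, ← Real.log_inv, Real.exp_log (inv_pos.mpr hx)]
  unfold Dd
  have htsq' : t^2 * Complex.normSq (1 - (starRingEnd ℂ) z * w) = Complex.normSq (z - w) := by
    rw [htsq]; exact div_mul_cancel₀ _ hd.ne'
  have h1t : (1:ℝ) - t ≠ 0 := by linarith
  have h1t' : (1:ℝ) + t ≠ 0 := by linarith
  have hp1 : (1:ℝ) - Complex.normSq z ≠ 0 := by linarith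
  have hp2 : (1:ℝ) - Complex.normSq w ≠ 0 := by linarith
  field_simp
  nlinarith [htsq', hk]

lemma one_le_Dd {z w : ℂ} (hz : ‖z‖ < 1) (hw : ‖w‖ < 1) :
    1 ≤ Dd z w := by
  have h1 := normSq_lt_one hz
  have h2 := normSq_lt_one hw
  have hnn := Complex.normSq_nonneg (z - w)
  unfold Dd
  have : 0 ≤ 2 * Complex.normSq (z - w) / ((1 - Complex.normSq z) * (1 - Complex.normSq w)) := by
    apply div_nonneg (by linarith)
    nlinarith
  linarith

lemma eq_of_Dd_le_one {z w : ℂ} (hz : ‖z‖ < 1) (hw : ‖w‖ < 1)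
    (h : Dd z w ≤ 1) : z = w := by
  have h1 := normSq_lt_one hz
  have h2 := normSq_lt_one hw
  unfold Dd at h
  have hden : 0 < (1 - Complex.normSq z) * (1 - Complex.normSq w) := by nlinarith
  have : Complex.normSq (z - w) ≤ 0 := by
    by_contra hc
    push_neg at hc
    have : 0 < 2 * Complex.normSq (z - w) / ((1 - Complex.normSq z) * (1 - Complex.normSq w)) :=
      div_pos (by linarith) hden
    linarith
  have : Complex.normSq (z - w) = 0 := le_antisymm this (Complex.normSq_nonneg _)
  have := Complex.normSq_eq_zero.mp this
  exact sub_eq_zero.mp this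

lemma hypDist_le_iff {z w : ℂ} (hz : ‖z‖ < 1) (hw : ‖w‖ < 1)
    {R : ℝ} (hR : 0 ≤ R) : hypDist z w ≤ R ↔ Dd z w ≤ Real.cosh R := by
  rw [← cosh_hypDist hz hw, Real.cosh_le_cosh,
    abs_of_nonneg (hypDist_nonneg hz hw), abs_of_nonneg hR]

lemma Dd_comm (z w : ℂ) : Dd z w = Dd w z := by
  unfold Dd
  rw [mul_comm (1 - Complex.normSq z), ← Complex.normSq_neg (z - w)]
  ring_nf

lemma Dd_formula {z w : ℂ} (hz : ‖z‖ < 1) (hw : ‖w‖ < 1) :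
    Dd z w = ((1 + Complex.normSq z) * (1 + Complex.normSq w)
        - 4 * (z.re * w.re + z.im * w.im))
      / ((1 - Complex.normSq z) * (1 - Complex.normSq w)) := by
  have h1 := normSq_lt_one hz
  have h2 := normSq_lt_one hw
  have hp1 : (1:ℝ) - Complex.normSq z ≠ 0 := by linarith
  have hp2 : (1:ℝ) - Complex.normSq w ≠ 0 := by linarith
  unfold Dd
  field_simp
  simp [Complex.normSq_apply, Complex.sub_re, Complex.sub_im]
  ring

set_option maxHeartbeats 1000000 in
/-- Key combination lemma (hyperboloid model): for positive weights `l, u` there is a point `m`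
on the geodesic through `c₁, c₂` with
`Dd m w * sqrt (l² + u² + 2 l u Dd c₁ c₂) = l * Dd c₁ w + u * Dd c₂ w` for every `w` in the disk. -/
lemma combo {c₁ c₂ : ℂ} (h1 : ‖c₁‖ < 1) (h2 : ‖c₂‖ < 1)
    {l u : ℝ} (hl : 0 < l) (hu : 0 < u) :
    ∃ m : ℂ, ‖m‖ < 1 ∧ ∀ w : ℂ, ‖w‖ < 1 →
      Dd m w * Real.sqrt (l^2 + u^2 + 2*l*u*Dd c₁ c₂) = l * Dd c₁ w + u * Dd c₂ w := by
  have hn1 : Complex.normSq c₁ < 1 := normSq_lt_one h1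
  have hn2 : Complex.normSq c₂ < 1 := normSq_lt_one h2
  have hn1' : (0:ℝ) < 1 - Complex.normSq c₁ := by linarith
  have hn2' : (0:ℝ) < 1 - Complex.normSq c₂ := by linarith
  have hns1 : 0 ≤ Complex.normSq c₁ := Complex.normSq_nonneg _
  have hns2 : 0 ≤ Complex.normSq c₂ := Complex.normSq_nonneg _
  set Sa : ℝ := l * (1 + Complex.normSq c₁) / (1 - Complex.normSq c₁)
      + u * (1 + Complex.normSq c₂) / (1 - Complex.normSq c₂) with hSa
  set Sx : ℝ := l * (2 * c₁.re) / (1 - Complex.normSq c₁)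
      + u * (2 * c₂.re) / (1 - Complex.normSq c₂) with hSx
  set Sy : ℝ := l * (2 * c₁.im) / (1 - Complex.normSq c₁)
      + u * (2 * c₂.im) / (1 - Complex.normSq c₂) with hSy
  set Q : ℝ := l^2 + u^2 + 2*l*u*Dd c₁ c₂ with hQ
  have hQ2 : Q = Sa^2 - Sx^2 - Sy^2 := by
    rw [hQ, hSa, hSx, hSy]
    unfold Dd
    field_simp
    simp [Complex.normSq_apply, Complex.sub_re, Complex.sub_im]
    ring
  have hDd12 : 1 ≤ Dd c₁ c₂ := one_le_Dd h1 h2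
  have hlu : 0 < 2*l*u := by positivity
  have hQpos : 0 < Q := by rw [hQ]; nlinarith [sq_nonneg (l+u), mul_pos hl hu]
  set n : ℝ := Real.sqrt Q with hn
  have hnpos : 0 < n := Real.sqrt_pos.mpr hQpos
  have hnsq : n^2 = Q := Real.sq_sqrt hQpos.le
  have hSapos : 0 < Sa := by
    rw [hSa]
    have : 0 < l * (1 + Complex.normSq c₁) / (1 - Complex.normSq c₁) := by positivity
    have : 0 < u * (1 + Complex.normSq c₂) / (1 - Complex.normSq c₂) := by positivity
    linarith
  have hSan : 0 < Sa + n := by linarith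
  set m : ℂ := ⟨Sx / (Sa + n), Sy / (Sa + n)⟩ with hm
  have hmsq : Complex.normSq m = (Sa - n) / (Sa + n) := by
    rw [hm, Complex.normSq_mk]
    have hrel : Sx * Sx + Sy * Sy = (Sa - n) * (Sa + n) := by
      have : Sx^2 + Sy^2 = Sa^2 - n^2 := by rw [hnsq, hQ2]; ring
      nlinarith [this]
    rw [div_mul_div_comm, div_mul_div_comm, ← add_div, hrel, mul_comm (Sa - n) (Sa + n),
      mul_div_mul_left _ _ (ne_of_gt hSan)]
  have hmlt : Complex.normSq m < 1 := by
    rw [hmsq, div_lt_one hSan]; linarith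
  have habs : ‖m‖ < 1 := by
    rw [← Complex.sq_norm] at hmlt
    nlinarith [norm_nonneg m]
  refine ⟨m, habs, fun w hw => ?_⟩
  have hnw : Complex.normSq w < 1 := normSq_lt_one hw
  have hnw' : (0:ℝ) < 1 - Complex.normSq w := by linarith
  have h1m : 1 - Complex.normSq m = 2*n / (Sa + n) := by
    rw [hmsq]; field_simp; ring
  have h2m : 1 + Complex.normSq m = 2*Sa / (Sa + n) := by
    rw [hmsq]; field_simp; ring
  rw [Dd_formula habs hw, Dd_formula h1 hw, Dd_formula h2 hw, h1m, h2m]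
  have hmre : m.re = Sx / (Sa + n) := rfl
  have hmim : m.im = Sy / (Sa + n) := rfl
  rw [hmre, hmim]
  trans ((Sa * (1 + Complex.normSq w) - 2 * (Sx * w.re + Sy * w.im)) / (1 - Complex.normSq w))
  · field_simp
    ring
  · rw [hSa, hSx, hSy]
    field_simp
    ring


lemma exists_R' {R k : ℝ} (hR : 0 < R) (hk : k < Real.cosh R) :
    ∃ R', 0 ≤ R' ∧ R' < R ∧ k ≤ Real.cosh R' := by
  have hc : Filter.Tendsto Real.cosh (nhds R) (nhds (Real.cosh R)) :=
    Real.continuous_cosh.continuousAt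
  have hev : ∀ᶠ x in nhds R, k < Real.cosh x := hc.eventually (eventually_gt_nhds hk)
  rw [Metric.eventually_nhds_iff] at hev
  obtain ⟨ε, hε, hball⟩ := hev
  refine ⟨max (R - ε/2) (R/2), le_max_of_le_right (by linarith), ?_, ?_⟩
  · apply max_lt <;> linarith
  · apply le_of_lt
    apply hball
    rw [Real.dist_eq, abs_lt]
    constructor
    · have : R - ε/2 ≤ max (R - ε/2) (R/2) := le_max_left _ _
      linarith
    · have : max (R - ε/2) (R/2) < R := max_lt (by linarith) (by linarith)
      linarith

lemma aux12 (K s : ℝ) (hK : 0 ≤ K) (hs : 0 ≤ s) :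
    2*K*(s/(8*K+8)) + s/(8*K+8) ≤ s/4 := by
  have h8k : (0:ℝ) < 8*K+8 := by linarith
  have heq : 2*K*(s/(8*K+8)) + s/(8*K+8) = (2*K+1)*s/(8*K+8) := by ring
  rw [heq, div_le_div_iff₀ h8k (by norm_num)]
  nlinarith

open Filter Topology

set_option maxHeartbeats 4000000 in
/-- For every nonempty bounded subset `B` of the hyperbolic disk there is a unique smallest
closed hyperbolic disk containing `B`; moreover if `B` is contained in the hyperbolic disk of
radius `δ` centered at `0`, then the center `c` of the smallest disk satisfies
`hypDist 0 c ≤ δ`. -/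
theorem stmt_1 (B : Set ℂ) (hne : B.Nonempty)
    (hsub : ∀ z ∈ B, ‖z‖ < 1)
    (hbdd : ∃ R : ℝ, ∀ z ∈ B, hypDist 0 z ≤ R) :
    (∃! c : ℂ, ‖c‖ < 1 ∧ B ⊆ {w | hypDist c w ≤ minRad B}) ∧
    (∀ c : ℂ, ‖c‖ < 1 → B ⊆ {w | hypDist c w ≤ minRad B} →
      ∀ δ : ℝ, B ⊆ {w | hypDist 0 w ≤ δ} → hypDist 0 c ≤ δ) := by
  classical
  obtain ⟨w₀, hw₀B⟩ := hne
  have hw₀ : ‖w₀‖ < 1 := hsub w₀ hw₀B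
  have h0lt : ‖(0:ℂ)‖ < 1 := by simp
  set A := {R | 0 ≤ R ∧ ∃ c : ℂ, ‖c‖ < 1 ∧ B ⊆ {w | hypDist c w ≤ R}} with hA
  have hAdef : minRad B = sInf A := rfl
  obtain ⟨R₀, hR₀⟩ := hbdd
  have hR₀0 : 0 ≤ R₀ := le_trans (hypDist_nonneg h0lt hw₀) (hR₀ w₀ hw₀B)
  have hAne : A.Nonempty := ⟨R₀, hR₀0, 0, h0lt, fun w hw => hR₀ w hw⟩
  have hAbdd : BddBelow A := ⟨0, fun R hR => hR.1⟩
  have hmr0 : 0 ≤ minRad B := by rw [hAdef]; exact le_csInf hAne (fun R hR => hR.1)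
  -- the sequence of almost-optimal centers
  have hseq : ∀ n : ℕ, ∃ R ∈ A, R < minRad B + 1/(n+1) := by
    intro n
    rw [hAdef]
    apply (csInf_lt_iff hAbdd hAne).mp
    rw [← hAdef]
    have : (0:ℝ) < 1/((n:ℝ)+1) := by positivity
    linarith
  choose Rs hRsA hRslt using hseq
  have hRs0 : ∀ n, 0 ≤ Rs n := fun n => (hRsA n).1
  choose cs hcs hcsB using fun n => (hRsA n).2
  have hRsge : ∀ n, minRad B ≤ Rs n := fun n => by rw [hAdef]; exact csInf_le hAbdd (hRsA n)
  have hRsle : ∀ n, Rs n ≤ minRad B + 1 := by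
    intro n
    have h1 : 1/((n:ℝ)+1) ≤ 1 := by
      rw [div_le_one (by positivity)]; simp
    linarith [hRslt n]
  -- uniform Euclidean bound on the centers
  set K : ℝ := (Real.cosh (minRad B + 1) - 1)/2 with hK
  have hK0 : 0 ≤ K := by
    have := Real.one_le_cosh (minRad B + 1); rw [hK]; linarith
  set β : ℝ := ‖w₀‖ with hβ
  have hβ0 : 0 ≤ β := norm_nonneg _
  have hβ1 : β < 1 := hw₀
  set r : ℝ := max ((1+β)/2) (1 - (1-β)^2/(8*K+8)) with hr
  have hr1 : r < 1 := by
    rw [hr]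
    apply max_lt (by linarith)
    have : 0 < (1-β)^2/(8*K+8) := div_pos (pow_pos (by linarith) 2) (by linarith)
    linarith
  have hcr : ∀ n, ‖cs n‖ ≤ r := by
    intro n
    have hcslt := hcs n
    have hd : hypDist (cs n) w₀ ≤ minRad B + 1 := le_trans (hcsB n hw₀B) (hRsle n)
    have hDle : Dd (cs n) w₀ ≤ Real.cosh (minRad B + 1) :=
      (hypDist_le_iff (hcs n) hw₀ (by linarith)).mp hd
    have hn1 : Complex.normSq (cs n) < 1 := normSq_lt_one (hcs n)
    have hn2 : Complex.normSq w₀ < 1 := normSq_lt_one hw₀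
    have hns1 : 0 ≤ Complex.normSq (cs n) := Complex.normSq_nonneg _
    have hns2 : 0 ≤ Complex.normSq w₀ := Complex.normSq_nonneg _
    have hden : 0 < (1 - Complex.normSq (cs n)) * (1 - Complex.normSq w₀) := by nlinarith
    have h4 : Complex.normSq (cs n - w₀) ≤ K * ((1 - Complex.normSq (cs n)) * (1 - Complex.normSq w₀)) := by
      unfold Dd at hDle
      have h5 : 2 * Complex.normSq (cs n - w₀) / ((1 - Complex.normSq (cs n)) * (1 - Complex.normSq w₀)) ≤ 2*K := by
        rw [hK]; linarith
      rw [div_le_iff₀ hden] at h5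
      nlinarith
    by_contra hcon
    push_neg at hcon
    rw [hr] at hcon
    have h1 : (1+β)/2 < ‖cs n‖ := lt_of_le_of_lt (le_max_left _ _) hcon
    have h2 : 1 - (1-β)^2/(8*K+8) < ‖cs n‖ := lt_of_le_of_lt (le_max_right _ _) hcon
    have h3 : ‖cs n‖ - β ≤ ‖cs n - w₀‖ := by
      have := norm_add_le (cs n - w₀) w₀
      simp only [sub_add_cancel] at this
      rw [hβ]; linarith
    have h6 : Complex.normSq (cs n - w₀) = (‖cs n - w₀‖)^2 := (Complex.sq_norm _).symm
    have h7 : Complex.normSq (cs n) = (‖cs n‖)^2 := (Complex.sq_norm _).symm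
    have h8 : (1 - Complex.normSq (cs n)) * (1 - Complex.normSq w₀) ≤ 2*(1 - ‖cs n‖) := by
      have ha : ‖cs n‖ < 1 := hcs n
      have ha0 : 0 ≤ ‖cs n‖ := norm_nonneg _
      nlinarith
    have h9 : (1-β)/2 < ‖cs n‖ - β := by linarith
    have h10 : ((1-β)/2)^2 < (‖cs n - w₀‖)^2 := by
      have : 0 ≤ (1-β)/2 := by linarith
      nlinarith [norm_nonneg (cs n - w₀)]
    set X : ℝ := (1-β)^2/(8*K+8) with hX
    have hXpos : 0 < X := div_pos (pow_pos (by linarith) 2) (by linarith)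
    have h2' : 1 - ‖cs n‖ < X := by linarith
    have h11 : 2*K*(1 - ‖cs n‖) < 2*K*X + X := by
      have := mul_le_mul_of_nonneg_left h2'.le (show (0:ℝ) ≤ 2*K by linarith)
      linarith
    have h12 : 2*K*X + X ≤ (1-β)^2/4 := by
      rw [hX]; exact aux12 K ((1-β)^2) hK0 (sq_nonneg _)
    have h13 : K * ((1 - Complex.normSq (cs n)) * (1 - Complex.normSq w₀)) ≤ 2*K*(1 - ‖cs n‖) := by
      have := mul_le_mul_of_nonneg_left h8 hK0
      linarith
    have h14 : ((1-β)/2)^2 = (1-β)^2/4 := by ring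
    linarith [h4, h6, h10, h11, h12, h13, h14]
  -- compactness: extract a limit center
  have hmem : ∀ n, cs n ∈ Metric.closedBall (0:ℂ) r := by
    intro n
    rw [Metric.mem_closedBall, dist_zero_right]
    exact hcr n
  obtain ⟨cstar, hcmem, φ, hφ, htend⟩ := (isCompact_closedBall (0:ℂ) r).tendsto_subseq hmem
  have hcstar : ‖cstar‖ < 1 := by
    rw [Metric.mem_closedBall, dist_zero_right] at hcmem
    linarith
  have hsubset : B ⊆ {w | hypDist cstar w ≤ minRad B} := by
    intro w hwB
    have hw : ‖w‖ < 1 := hsub w hwB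
    have hwden : (1 - Complex.normSq cstar) * (1 - Complex.normSq w) ≠ 0 := by
      have hc' := normSq_lt_one hcstar
      have hw' := normSq_lt_one hw
      exact ne_of_gt (mul_pos (by linarith) (by linarith))
    have hcont : ContinuousAt (fun z : ℂ => Dd z w) cstar := by
      unfold Dd
      apply ContinuousAt.add continuousAt_const
      apply ContinuousAt.div
      · exact (continuous_const.mul (Complex.continuous_normSq.comp
          (continuous_id.sub continuous_const))).continuousAt
      · exact ((continuous_const.sub Complex.continuous_normSq).mul continuous_const).continuousAt
      · exact hwden
    have h1 : Tendsto (fun k => Dd (cs (φ k)) w) atTop (𝓝 (Dd cstar w)) :=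
      hcont.tendsto.comp htend
    have hRtend : Tendsto Rs atTop (𝓝 (minRad B)) := by
      have hup : Tendsto (fun n : ℕ => minRad B + 1/((n:ℝ)+1)) atTop (𝓝 (minRad B)) := by
        have := tendsto_const_nhds (x := minRad B) (f := atTop (α := ℕ))
        have h2 := this.add tendsto_one_div_add_atTop_nhds_zero_nat
        simpa using h2
      exact tendsto_of_tendsto_of_tendsto_of_le_of_le tendsto_const_nhds hup hRsge
        (fun n => (hRslt n).le)
    have h2 : Tendsto (fun k => Real.cosh (Rs (φ k))) atTop (𝓝 (Real.cosh (minRad B))) :=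
      Real.continuous_cosh.continuousAt.tendsto.comp (hRtend.comp hφ.tendsto_atTop)
    have hle : ∀ k, Dd (cs (φ k)) w ≤ Real.cosh (Rs (φ k)) := fun k =>
      (hypDist_le_iff (hcs _) hw (hRs0 _)).mp (hcsB _ hwB)
    have hfin : Dd cstar w ≤ Real.cosh (minRad B) := le_of_tendsto_of_tendsto' h1 h2 hle
    exact (hypDist_le_iff hcstar hw hmr0).mpr hfin
  -- uniqueness of the center
  have huniq : ∀ c₁ c₂ : ℂ, ‖c₁‖ < 1 → B ⊆ {w | hypDist c₁ w ≤ minRad B} →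
      ‖c₂‖ < 1 → B ⊆ {w | hypDist c₂ w ≤ minRad B} → c₁ = c₂ := by
    intro c₁ c₂ ha1 hb1 ha2 hb2
    by_contra hne'
    rcases eq_or_lt_of_le hmr0 with h0 | hpos
    · have e1 : c₁ = w₀ := by
        apply eq_of_Dd_le_one ha1 hw₀
        have := (hypDist_le_iff ha1 hw₀ hmr0).mp (hb1 hw₀B)
        rw [← h0, Real.cosh_zero] at this
        exact this
      have e2 : c₂ = w₀ := by
        apply eq_of_Dd_le_one ha2 hw₀
        have := (hypDist_le_iff ha2 hw₀ hmr0).mp (hb2 hw₀B)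
        rw [← h0, Real.cosh_zero] at this
        exact this
      exact hne' (e1.trans e2.symm)
    · have hD12 : 1 < Dd c₁ c₂ := by
        rcases lt_or_eq_of_le (one_le_Dd ha1 ha2) with h | h
        · exact h
        · exact absurd (eq_of_Dd_le_one ha1 ha2 h.symm.le) hne'
      obtain ⟨m, hmlt, hmprop⟩ := combo ha1 ha2 one_pos one_pos
      set n := Real.sqrt ((1:ℝ)^2 + 1^2 + 2*1*1*Dd c₁ c₂) with hn
      have hn2 : 2 < n := by
        have h4 : (4:ℝ) < (1:ℝ)^2 + 1^2 + 2*1*1*Dd c₁ c₂ := by nlinarith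
        have : Real.sqrt 4 < n := Real.sqrt_lt_sqrt (by norm_num) h4
        rwa [show (4:ℝ) = 2^2 by norm_num, Real.sqrt_sq (by norm_num)] at this
      have hnpos : (0:ℝ) < n := by linarith
      have hk : 2 * Real.cosh (minRad B) / n < Real.cosh (minRad B) := by
        rw [div_lt_iff₀ hnpos]
        nlinarith [Real.cosh_pos (minRad B)]
      obtain ⟨R', hR'0, hR'lt, hR'k⟩ := exists_R' hpos hk
      have hR'A : R' ∈ A := by
        refine ⟨hR'0, m, hmlt, fun w hwB => ?_⟩
        have hw := hsub w hwB
        have hd1 := (hypDist_le_iff ha1 hw hmr0).mp (hb1 hwB)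
        have hd2 := (hypDist_le_iff ha2 hw hmr0).mp (hb2 hwB)
        have heq := hmprop w hw
        have hDm : Dd m w ≤ 2 * Real.cosh (minRad B) / n := by
          rw [le_div_iff₀ hnpos]
          nlinarith
        exact (hypDist_le_iff hmlt hw hR'0).mpr (by linarith)
      have : minRad B ≤ R' := by rw [hAdef]; exact csInf_le hAbdd hR'A
      linarith
  refine ⟨⟨cstar, ⟨hcstar, hsubset⟩, fun y hy => huniq y cstar hy.1 hy.2 hcstar hsubset⟩, ?_⟩
  -- the δ-bound
  intro c hc hcov δ hδ
  have hδ0 : 0 ≤ δ := le_trans (hypDist_nonneg h0lt hw₀) (hδ hw₀B)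
  have hRδ : minRad B ≤ δ := by
    rw [hAdef]; exact csInf_le hAbdd ⟨hδ0, 0, h0lt, hδ⟩
  by_contra hcon
  push_neg at hcon
  rcases eq_or_lt_of_le hmr0 with h0 | hpos
  · have hc1 : c = w₀ := by
      apply eq_of_Dd_le_one hc hw₀
      have := (hypDist_le_iff hc hw₀ hmr0).mp (hcov hw₀B)
      rw [← h0, Real.cosh_zero] at this
      exact this
    have : hypDist 0 c ≤ δ := by rw [hc1]; exact hδ hw₀B
    linarith
  · set P := Dd c 0 with hP
    have hP_eq : Real.cosh (hypDist 0 c) = P := by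
      rw [cosh_hypDist h0lt hc, hP, Dd_comm]
    have hPgt : Real.cosh δ < P := by
      rw [← hP_eq, Real.cosh_lt_cosh, abs_of_nonneg hδ0,
        abs_of_nonneg (hypDist_nonneg h0lt hc)]
      exact hcon
    set cR := Real.cosh (minRad B) with hcRdef
    have hcR1 : 1 ≤ cR := Real.one_le_cosh _
    have hcoshδ1 : 1 ≤ Real.cosh δ := Real.one_le_cosh _
    have hcRδ : cR ≤ Real.cosh δ := by
      rw [hcRdef, Real.cosh_le_cosh, abs_of_nonneg hmr0, abs_of_nonneg hδ0]
      exact hRδ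
    have hPcR : Real.cosh δ < P * cR := by nlinarith
    set τ := cR * (P * cR - Real.cosh δ) / (Real.cosh δ)^2 with hτ
    have hτpos : 0 < τ := by
      rw [hτ]
      apply div_pos (by nlinarith) (by positivity)
    obtain ⟨m, hmlt, hmprop⟩ := combo hc h0lt one_pos hτpos
    set n := Real.sqrt ((1:ℝ)^2 + τ^2 + 2*1*τ*Dd c 0) with hn
    have hτc : τ * (Real.cosh δ)^2 = cR*(P*cR - Real.cosh δ) := by
      rw [hτ]; field_simp
    have hsq : ((cR + τ * Real.cosh δ)/cR)^2 < 1 + 2*τ*P := by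
      rw [div_pow, div_lt_iff₀ (by positivity)]
      have hcRpos : (0:ℝ) < cR := by linarith
      have e1 : τ^2*(Real.cosh δ)^2 = τ*(cR*(P*cR - Real.cosh δ)) := by
        rw [← hτc]; ring
      have hfact : 0 < τ*cR*(P*cR - Real.cosh δ) :=
        mul_pos (mul_pos hτpos hcRpos) (by linarith)
      nlinarith [e1, hfact]
    have hlt : (cR + τ * Real.cosh δ)/cR < n := by
      have h1 : (cR + τ * Real.cosh δ)/cR < Real.sqrt (1 + 2*τ*P) := by
        rw [Real.lt_sqrt (by positivity)]
        exact hsq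
      have h2 : Real.sqrt (1 + 2*τ*P) ≤ n := by
        rw [hn, ← hP]
        apply Real.sqrt_le_sqrt
        nlinarith [sq_nonneg τ]
      linarith
    have hnpos : (0:ℝ) < n := lt_trans (by positivity) hlt
    have hκ : (cR + τ * Real.cosh δ)/n < cR := by
      rw [div_lt_iff₀ hnpos]
      rw [div_lt_iff₀ (by positivity : (0:ℝ) < cR)] at hlt
      linarith [hlt]
    obtain ⟨R', hR'0, hR'lt, hR'k⟩ := exists_R' hpos hκ
    have hR'A : R' ∈ A := by
      refine ⟨hR'0, m, hmlt, fun w hwB => ?_⟩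
      have hw := hsub w hwB
      have hd1 : Dd c w ≤ cR := (hypDist_le_iff hc hw hmr0).mp (hcov hwB)
      have hd2 : Dd 0 w ≤ Real.cosh δ := (hypDist_le_iff h0lt hw hδ0).mp (hδ hwB)
      have heq := hmprop w hw
      have hDm : Dd m w ≤ (cR + τ * Real.cosh δ)/n := by
        rw [le_div_iff₀ hnpos]
        nlinarith
      exact (hypDist_le_iff hmlt hw hR'0).mpr (by linarith)
    have : minRad B ≤ R' := by rw [hAdef]; exact csInf_le hAbdd hR'A
    linarith
end

section
/- Let {B_k}_{k∈I} be a finite or countable collection of pairwise disjoint balls in ℝ² (or a closed surface) and {a_k} nonnegative reals. For each λ ≥ 1 there is a constant C depending only on λ such that ‖Σ_k a_k χ_{λB_k}‖_{L²} ≤ C ‖Σ_k a_k χ_{B_k}‖_{L²}, where λB_k is the ball concentric with B_k of λ times the radius. -/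
open MeasureTheory

open Metric Set
open scoped ENNReal NNReal

noncomputable section BojarskiProof

local notation "Pl" => EuclideanSpace ℝ (Fin 2)

namespace BojarskiAux

lemma finrank_pl : Module.finrank ℝ (EuclideanSpace ℝ (Fin 2)) = 2 := by
  simp [finrank_euclideanSpace]

lemma vol_ball (x : Pl) {ρ : ℝ} (hρ : 0 ≤ ρ) :
    volume (ball x ρ) = ENNReal.ofReal (ρ ^ 2) * volume (ball (0 : Pl) 1) := by
  rw [Measure.addHaar_ball volume x hρ, finrank_pl]

lemma vol_cB (x : Pl) {ρ : ℝ} (hρ : 0 ≤ ρ) :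
    volume (closedBall x ρ) = ENNReal.ofReal (ρ ^ 2) * volume (ball (0 : Pl) 1) := by
  rw [Measure.addHaar_closedBall volume x hρ, finrank_pl]

lemma vol_cB_four (x : Pl) {ρ : ℝ} (hρ : 0 ≤ ρ) :
    volume (closedBall x (4 * ρ)) = 16 * volume (ball x ρ) := by
  rw [vol_cB x (by positivity), vol_ball x hρ, mul_pow, ENNReal.ofReal_mul (by positivity), ← mul_assoc]
  norm_num



lemma enn_cs {I : Type} (S : Finset I) (f g : I → ℝ≥0∞) :
    ∑ k ∈ S, f k * g k ≤
      (∑ k ∈ S, (f k) ^ 2) ^ (1/2 : ℝ) * (∑ k ∈ S, (g k) ^ 2) ^ (1/2 : ℝ) := by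
  letI : MeasurableSpace I := ⊤
  haveI : MeasurableSingletonClass I := ⟨fun _ => trivial⟩
  have key : ∀ φ : I → ℝ≥0∞, ∑ k ∈ S, φ k
      = ∫⁻ k, (↑S : Set I).indicator φ k ∂Measure.count := by
    intro φ
    rw [lintegral_count]
    rw [tsum_eq_sum (s := S) (fun b hb => Set.indicator_of_notMem (by simpa using hb) φ)]
    exact Finset.sum_congr rfl fun k hk => (Set.indicator_of_mem (by simpa using hk) φ).symm
  have conj : (2:ℝ).HolderConjugate 2 := Real.HolderConjugate.two_two
  have H := ENNReal.lintegral_mul_le_Lp_mul_Lq Measure.count conj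
    (f := (↑S : Set I).indicator f) (g := (↑S : Set I).indicator g)
    (Measurable.aemeasurable (by measurability)) (Measurable.aemeasurable (by measurability))
  rw [key (fun k => f k * g k)]
  have e1 : (↑S : Set I).indicator (fun k => f k * g k)
      = fun k => (↑S : Set I).indicator f k * (↑S : Set I).indicator g k := by
    funext k; by_cases hk : k ∈ (↑S : Set I) <;> simp [hk]
  rw [e1]
  refine le_trans (le_of_eq ?_) (H.trans (le_of_eq ?_))
  · rfl
  · congr 1
    · congr 1
      rw [key (fun k => f k ^ 2)]
      congr 1; funext k
      by_cases hk : k ∈ (↑S : Set I) <;>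
        simp [hk, ENNReal.rpow_two]
    · congr 1
      rw [key (fun k => g k ^ 2)]
      congr 1; funext k
      by_cases hk : k ∈ (↑S : Set I) <;> simp [hk, ENNReal.rpow_two]


lemma meas_layer (a : ℝ≥0∞) : MeasurableSet {t : ℝ | ENNReal.ofReal t < a} :=
  measurableSet_lt ENNReal.measurable_ofReal measurable_const

lemma vol_layer (a : ℝ≥0∞) : volume ({t : ℝ | ENNReal.ofReal t < a} ∩ Ioi (0:ℝ)) = a := by
  rcases eq_or_ne a ⊤ with rfl | ha
  · have : {t : ℝ | ENNReal.ofReal t < ⊤} ∩ Ioi (0:ℝ) = Ioi 0 := by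
      ext t; simp [ENNReal.ofReal_lt_top]
    rw [this, Real.volume_Ioi]
  · have : {t : ℝ | ENNReal.ofReal t < a} ∩ Ioi (0:ℝ) = Ioo 0 a.toReal := by
      ext t
      simp only [Set.mem_inter_iff, Set.mem_setOf_eq, Set.mem_Ioi, Set.mem_Ioo]
      constructor
      · rintro ⟨h1, h2⟩
        exact ⟨h2, (ENNReal.ofReal_lt_iff_lt_toReal h2.le ha).mp h1⟩
      · rintro ⟨h1, h2⟩
        exact ⟨(ENNReal.ofReal_lt_iff_lt_toReal h1.le ha).mpr h2, h1⟩
    rw [this, Real.volume_Ioo, sub_zero, ENNReal.ofReal_toReal ha]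

lemma sq_le_layer (a : ℝ≥0∞) :
    a ^ 2 ≤ 8 * ∫⁻ t in Ioi (0:ℝ),
      {t' : ℝ | ENNReal.ofReal t' < a}.indicator (fun t' => ENNReal.ofReal t') t := by
  rcases eq_or_ne a 0 with rfl | ha0
  · simp
  rcases eq_or_ne a ⊤ with rfl | hatop
  · -- RHS is ⊤
    have h1 : ∫⁻ t in Ioi (0:ℝ),
        {t' : ℝ | ENNReal.ofReal t' < (⊤:ℝ≥0∞)}.indicator (fun t' => ENNReal.ofReal t') t = ⊤ := by
      have hset : {t' : ℝ | ENNReal.ofReal t' < (⊤:ℝ≥0∞)} = univ := by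
        ext t; simp [ENNReal.ofReal_lt_top]
      rw [hset]
      simp only [Set.indicator_univ]
      refine top_unique ?_
      calc (⊤:ℝ≥0∞) = 1 * volume (Ioi (1:ℝ)) := by rw [Real.volume_Ioi]; simp
        _ = ∫⁻ t in Ioi (1:ℝ), 1 := by rw [setLIntegral_const]
        _ ≤ ∫⁻ t in Ioi (1:ℝ), ENNReal.ofReal t := by
            refine setLIntegral_mono' measurableSet_Ioi fun t ht => ?_
            simpa using ENNReal.one_le_ofReal.mpr (le_of_lt ht)
        _ ≤ ∫⁻ t in Ioi (0:ℝ), ENNReal.ofReal t :=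
            lintegral_mono_set (Ioi_subset_Ioi (by norm_num))
    rw [h1]; simp
  · set α := a.toReal with hα
    have hαpos : 0 < α := ENNReal.toReal_pos ha0 hatop
    have haα : a = ENNReal.ofReal α := (ENNReal.ofReal_toReal hatop).symm
    have hJ : Ioc (α/2) (3*α/4) ⊆ Ioi (0:ℝ) := by
      intro t ht; exact lt_trans (by positivity) ht.1
    calc a ^ 2 = ENNReal.ofReal (α/2) * ENNReal.ofReal (α/4) * 8 := by
          rw [← ENNReal.ofReal_mul (by positivity), ← ENNReal.ofReal_ofNat 8,
            ← ENNReal.ofReal_mul (by positivity), haα, ← ENNReal.ofReal_pow hαpos.le]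
          congr 1; ring
      _ = 8 * (ENNReal.ofReal (α/2) * volume (Ioc (α/2) (3*α/4))) := by
          rw [Real.volume_Ioc, show 3*α/4 - α/2 = α/4 by ring]; ring
      _ = 8 * ∫⁻ _t in Ioc (α/2) (3*α/4), ENNReal.ofReal (α/2) := by
          rw [setLIntegral_const]
      _ ≤ 8 * ∫⁻ t in Ioc (α/2) (3*α/4),
            {t' : ℝ | ENNReal.ofReal t' < a}.indicator (fun t' => ENNReal.ofReal t') t := by
          refine mul_le_mul_right (setLIntegral_mono' measurableSet_Ioc fun t ht => ?_) 8
          have ht0 : (0:ℝ) < t := lt_trans (by positivity) ht.1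
          have htmem : ENNReal.ofReal t < a := by
            rw [(ENNReal.ofReal_lt_iff_lt_toReal ht0.le hatop)]
            calc t ≤ 3*α/4 := ht.2
              _ < α := by linarith
          have htmem' : t ∈ {t' : ℝ | ENNReal.ofReal t' < a} := htmem
          rw [Set.indicator_of_mem htmem']
          exact ENNReal.ofReal_le_ofReal ht.1.le
      _ ≤ 8 * ∫⁻ t in Ioi (0:ℝ),
            {t' : ℝ | ENNReal.ofReal t' < a}.indicator (fun t' => ENNReal.ofReal t') t :=
          mul_le_mul_right (lintegral_mono_set hJ) 8


lemma weak_type {I : Type} (c : I → Pl) (r ρ : I → ℝ) (hr : ∀ k, 0 < r k)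
    (hrρ : ∀ k, r k ≤ ρ k)
    (hdisj : Pairwise fun k l => Disjoint (ball (c k) (r k)) (ball (c l) (r l)))
    (E : Finset I) (h : Pl → ℝ≥0∞) {s : ℝ≥0∞}
    (hE : ∀ k ∈ E, s * volume (ball (c k) (ρ k)) ≤ ∫⁻ x in ball (c k) (ρ k), h x) :
    s * ∑ k ∈ E, volume (ball (c k) (r k)) ≤ 16 * ∫⁻ x, h x := by
  have hρpos : ∀ k, 0 < ρ k := fun k => (hr k).trans_le (hrρ k)
  -- bound on radii
  obtain ⟨R, hR⟩ : ∃ R, ∀ k ∈ (↑E : Set I), ρ k ≤ R := by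
    rcases ((E.finite_toSet.image ρ).bddAbove) with ⟨R, hR⟩
    exact ⟨R, fun k hk => hR (Set.mem_image_of_mem ρ hk)⟩
  obtain ⟨u, huE, hud, hucov⟩ :=
    Vitali.exists_disjoint_subfamily_covering_enlargement_closedBall (↑E : Set I) c ρ R
      hR 4 (by norm_num)
  have hufin : u.Finite := E.finite_toSet.subset huE
  set F : Finset I := hufin.toFinset with hF
  have hFu : (↑F : Set I) = u := hufin.coe_toFinset
  have hFE : ∀ b ∈ F, b ∈ E := by
    intro b hb
    exact huE (hufin.mem_toFinset.mp hb)
  -- disjointness of the small balls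
  have hdisjE : (↑E : Set I).PairwiseDisjoint fun k => ball (c k) (r k) :=
    fun k _ l _ hkl => hdisj hkl
  calc s * ∑ k ∈ E, volume (ball (c k) (r k))
      = s * volume (⋃ k ∈ E, ball (c k) (r k)) := by
        rw [measure_biUnion_finset hdisjE fun k _ => measurableSet_ball]
    _ ≤ s * volume (⋃ b ∈ F, closedBall (c b) (4 * ρ b)) := by
        have hsub : (⋃ k ∈ E, ball (c k) (r k)) ⊆ ⋃ b ∈ F, closedBall (c b) (4 * ρ b) := by
          intro x hx
          obtain ⟨k, hk, hxk⟩ := Set.mem_iUnion₂.mp hx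
          obtain ⟨b, hbu, hsubb⟩ := hucov k (by simpa using hk)
          have hbF : b ∈ F := hufin.mem_toFinset.mpr hbu
          exact Set.mem_iUnion₂.mpr ⟨b, hbF,
            hsubb (closedBall_subset_closedBall (hrρ k) (ball_subset_closedBall hxk))⟩
        exact mul_le_mul_right (measure_mono hsub) s
    _ ≤ s * ∑ b ∈ F, volume (closedBall (c b) (4 * ρ b)) := by
        gcongr; exact measure_biUnion_finset_le F _
    _ = 16 * ∑ b ∈ F, s * volume (ball (c b) (ρ b)) := by
        rw [Finset.mul_sum, Finset.mul_sum]
        congr 1; funext b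
        rw [vol_cB_four (c b) (hρpos b).le]; ring
    _ ≤ 16 * ∑ b ∈ F, ∫⁻ x in ball (c b) (ρ b), h x := by
        gcongr with b hb
        exact hE b (hFE b hb)
    _ = 16 * ∫⁻ x in ⋃ b ∈ F, ball (c b) (ρ b), h x := by
        congr 1
        rw [lintegral_biUnion_finset ?_ (fun b _ => measurableSet_ball)]
        · intro k hk l hl hkl
          have : Disjoint (closedBall (c k) (ρ k)) (closedBall (c l) (ρ l)) := by
            rw [hFu] at hk hl
            exact hud hk hl hkl
          exact this.mono ball_subset_closedBall ball_subset_closedBall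
    _ ≤ 16 * ∫⁻ x, h x := by
        gcongr
        exact Measure.restrict_le_self


lemma maximal {I : Type} (c : I → Pl) (r ρ : I → ℝ) (hr : ∀ k, 0 < r k)
    (hrρ : ∀ k, r k ≤ ρ k)
    (hdisj : Pairwise fun k l => Disjoint (ball (c k) (r k)) (ball (c l) (r l)))
    (S : Finset I) (h : Pl → ℝ≥0∞) (hm : Measurable h) :
    ∑ k ∈ S, volume (ball (c k) (r k)) *
      ((∫⁻ x in ball (c k) (ρ k), h x) / volume (ball (c k) (ρ k))) ^ 2
      ≤ 512 * ∫⁻ x, (h x) ^ 2 := by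
  have hρpos : ∀ k, 0 < ρ k := fun k => (hr k).trans_le (hrρ k)
  set w : I → ℝ≥0∞ := fun k => volume (ball (c k) (r k)) with hw
  set m : I → ℝ≥0∞ := fun k => volume (ball (c k) (ρ k)) with hmdef
  set A : I → ℝ≥0∞ := fun k => ∫⁻ x in ball (c k) (ρ k), h x with hA
  set avg : I → ℝ≥0∞ := fun k => A k / m k with havg
  have hm0 : ∀ k, m k ≠ 0 := fun k => (measure_ball_pos volume (c k) (hρpos k)).ne'
  have hmtop : ∀ k, m k ≠ ⊤ := fun k => measure_ball_lt_top.ne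
  set ψ : ℝ≥0∞ → ℝ → ℝ≥0∞ :=
    fun a t => {t' : ℝ | ENNReal.ofReal t' < a}.indicator (fun t' => ENNReal.ofReal t') t with hψ
  have ψmeas : ∀ a, Measurable (ψ a) :=
    fun a => ENNReal.measurable_ofReal.indicator (meas_layer a)
  -- Step 1 : pass to the layer-cake integral
  have step1 : ∑ k ∈ S, w k * (avg k) ^ 2
      ≤ 8 * ∫⁻ t in Ioi (0:ℝ), ∑ k ∈ S, w k * ψ (avg k) t := by
    calc ∑ k ∈ S, w k * (avg k) ^ 2
        ≤ ∑ k ∈ S, w k * (8 * ∫⁻ t in Ioi (0:ℝ), ψ (avg k) t) :=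
          Finset.sum_le_sum fun k _ => mul_le_mul_right (sq_le_layer (avg k)) (w k)
      _ = 8 * ∑ k ∈ S, ∫⁻ t in Ioi (0:ℝ), w k * ψ (avg k) t := by
          rw [Finset.mul_sum]
          refine Finset.sum_congr rfl fun k _ => ?_
          rw [lintegral_const_mul _ (ψmeas (avg k))]; ring
      _ = 8 * ∫⁻ t in Ioi (0:ℝ), ∑ k ∈ S, w k * ψ (avg k) t := by
          rw [lintegral_finset_sum' S fun k _ => ((ψmeas (avg k)).const_mul (w k)).aemeasurable]
  -- Step 2 : pointwise weak-type bound
  have step2 : ∀ t : ℝ, t ∈ Ioi (0:ℝ) → ∑ k ∈ S, w k * ψ (avg k) t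
      ≤ 32 * ∫⁻ x, ({x : Pl | ENNReal.ofReal t < 2 * h x}.indicator h) x := by
    intro t ht
    have ht0 : (0:ℝ) < t := ht
    set s : ℝ≥0∞ := ENNReal.ofReal (t/2) with hs
    have hs0 : s ≠ 0 := by
      simp only [hs, ne_eq, ENNReal.ofReal_eq_zero, not_le]; linarith
    have hstop : s ≠ ⊤ := ENNReal.ofReal_ne_top
    have htau : ENNReal.ofReal t = 2 * s := by
      rw [hs, ← ENNReal.ofReal_ofNat 2, ← ENNReal.ofReal_mul (by norm_num)]
      congr 1; ring
    set h' : Pl → ℝ≥0∞ := {x : Pl | ENNReal.ofReal t < 2 * h x}.indicator h with hh'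
    set Et : Finset I := S.filter (fun k => ENNReal.ofReal t < avg k) with hEt
    have hsum : ∑ k ∈ S, w k * ψ (avg k) t = ENNReal.ofReal t * ∑ k ∈ Et, w k := by
      rw [hEt, Finset.mul_sum, Finset.sum_filter]
      refine Finset.sum_congr rfl fun k _ => ?_
      simp only [hψ, Set.indicator_apply, Set.mem_setOf_eq]
      split_ifs with hk
      · ring
      · rw [mul_zero]
    have hEtkey : ∀ k ∈ Et, s * m k ≤ ∫⁻ x in ball (c k) (ρ k), h' x := by
      intro k hk
      rw [hEt, Finset.mem_filter] at hk
      have hlt : ENNReal.ofReal t * m k < A k := by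
        have := hk.2
        rw [havg] at this
        exact (ENNReal.lt_div_iff_mul_lt (Or.inl (hm0 k)) (Or.inl (hmtop k))).mp this
      have hpoint : ∀ x : Pl, h x ≤ h' x + s := by
        intro x
        by_cases hx : x ∈ {x : Pl | ENNReal.ofReal t < 2 * h x}
        · rw [hh', Set.indicator_of_mem hx]; exact le_self_add
        · rw [hh', Set.indicator_of_notMem hx, zero_add]
          have hx' : 2 * h x ≤ ENNReal.ofReal t := not_lt.mp hx
          rw [htau] at hx'
          exact (ENNReal.mul_le_mul_iff_right (by norm_num) (by norm_num)).mp hx'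
      have hAle : A k ≤ (∫⁻ x in ball (c k) (ρ k), h' x) + s * m k := by
        calc A k ≤ ∫⁻ x in ball (c k) (ρ k), (h' x + s) := by
              rw [hA]; exact lintegral_mono fun x => hpoint x
          _ = (∫⁻ x in ball (c k) (ρ k), h' x) + s * m k := by
              rw [lintegral_add_right _ measurable_const, setLIntegral_const]
      by_contra hcon
      push_neg at hcon
      have : A k < ENNReal.ofReal t * m k := by
        calc A k ≤ (∫⁻ x in ball (c k) (ρ k), h' x) + s * m k := hAle
          _ < s * m k + s * m k := by
              exact ENNReal.add_lt_add_right (ENNReal.mul_ne_top hstop (hmtop k)) hcon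
          _ = ENNReal.ofReal t * m k := by rw [htau]; ring
      exact absurd hlt (not_lt.mpr this.le)
    have hweak := weak_type c r ρ hr hrρ hdisj Et h' hEtkey
    calc ∑ k ∈ S, w k * ψ (avg k) t = 2 * (s * ∑ k ∈ Et, w k) := by
          rw [hsum, htau]; ring
      _ ≤ 2 * (16 * ∫⁻ x, h' x) := by gcongr
      _ = 32 * ∫⁻ x, h' x := by ring
  -- Step 3 : Fubini
  set D : Set (ℝ × Pl) := {p | ENNReal.ofReal p.1 < 2 * h p.2} with hD
  have hDmeas : MeasurableSet D :=
    measurableSet_lt (ENNReal.measurable_ofReal.comp measurable_fst)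
      ((hm.comp measurable_snd).const_mul 2)
  have key3 : ∫⁻ t in Ioi (0:ℝ), ∫⁻ x, ({x : Pl | ENNReal.ofReal t < 2 * h x}.indicator h) x
      = ∫⁻ x, 2 * (h x) ^ 2 := by
    have hrepr : ∀ t : ℝ, ∀ x : Pl,
        ({x : Pl | ENNReal.ofReal t < 2 * h x}.indicator h) x
          = h x * D.indicator (fun _ => (1:ℝ≥0∞)) (t, x) := by
      intro t x
      simp only [hD, Set.indicator_apply, Set.mem_setOf_eq]
      split_ifs with hx
      · rw [mul_one]
      · rw [mul_zero]
    calc ∫⁻ t in Ioi (0:ℝ), ∫⁻ x, ({x : Pl | ENNReal.ofReal t < 2 * h x}.indicator h) x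
        = ∫⁻ t in Ioi (0:ℝ), ∫⁻ x, h x * D.indicator (fun _ => (1:ℝ≥0∞)) (t, x) := by
          refine lintegral_congr fun t => lintegral_congr fun x => hrepr t x
      _ = ∫⁻ x, ∫⁻ t in Ioi (0:ℝ), h x * D.indicator (fun _ => (1:ℝ≥0∞)) (t, x) := by
          apply lintegral_lintegral_swap
          exact ((hm.comp measurable_snd).mul
            (measurable_const.indicator hDmeas)).aemeasurable
      _ = ∫⁻ x, 2 * (h x) ^ 2 := by
          refine lintegral_congr fun x => ?_
          have hind : ∀ t : ℝ, D.indicator (fun _ => (1:ℝ≥0∞)) (t, x)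
              = {t' : ℝ | ENNReal.ofReal t' < 2 * h x}.indicator (fun _ => (1:ℝ≥0∞)) t := by
            intro t
            simp only [hD, Set.indicator_apply, Set.mem_setOf_eq]
          calc ∫⁻ t in Ioi (0:ℝ), h x * D.indicator (fun _ => (1:ℝ≥0∞)) (t, x)
              = h x * ∫⁻ t in Ioi (0:ℝ),
                  {t' : ℝ | ENNReal.ofReal t' < 2 * h x}.indicator (fun _ => (1:ℝ≥0∞)) t := by
                rw [← lintegral_const_mul _ (measurable_const.indicator (meas_layer (2 * h x)))]
                exact lintegral_congr fun t => by rw [hind t]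
            _ = h x * volume ({t' : ℝ | ENNReal.ofReal t' < 2 * h x} ∩ Ioi (0:ℝ)) := by
                congr 1
                rw [lintegral_indicator (meas_layer (2 * h x)), setLIntegral_one,
                  Measure.restrict_apply (meas_layer (2 * h x))]
            _ = 2 * (h x) ^ 2 := by rw [vol_layer (2 * h x)]; ring
  -- assemble
  calc ∑ k ∈ S, w k * (avg k) ^ 2
      ≤ 8 * ∫⁻ t in Ioi (0:ℝ), ∑ k ∈ S, w k * ψ (avg k) t := step1
    _ ≤ 8 * ∫⁻ t in Ioi (0:ℝ),
          32 * ∫⁻ x, ({x : Pl | ENNReal.ofReal t < 2 * h x}.indicator h) x := by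
        refine mul_le_mul_right (setLIntegral_mono' measurableSet_Ioi step2) 8
    _ = 256 * ∫⁻ t in Ioi (0:ℝ), ∫⁻ x, ({x : Pl | ENNReal.ofReal t < 2 * h x}.indicator h) x := by
        rw [lintegral_const_mul' 32 _ (by norm_num)]; ring
    _ = 256 * ∫⁻ x, 2 * (h x) ^ 2 := by rw [key3]
    _ = 512 * ∫⁻ x, (h x) ^ 2 := by rw [lintegral_const_mul' 2 _ (by norm_num)]; ring


lemma mul_indicator_ball (U V : Set Pl) (b1 b2 : ℝ≥0∞) (x : Pl) :
    (b1 * U.indicator (fun _ => (1:ℝ≥0∞)) x) * (b2 * V.indicator (fun _ => (1:ℝ≥0∞)) x)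
      = b1 * b2 * (U ∩ V).indicator (fun _ => (1:ℝ≥0∞)) x := by
  by_cases hU : x ∈ U <;> by_cases hV : x ∈ V <;>
    simp [Set.indicator_apply, hU, hV, Set.mem_inter_iff]
  all_goals ring

lemma expand {I : Type} [Countable I] (c : I → Pl) (ρ : I → ℝ) (b : I → ℝ≥0∞) :
    ∫⁻ x, (∑' k, b k * (ball (c k) (ρ k)).indicator (fun _ => (1:ℝ≥0∞)) x) ^ 2
      = ∑' k, ∑' l, b k * b l * volume (ball (c k) (ρ k) ∩ ball (c l) (ρ l)) := by
  set χ : I → Pl → ℝ≥0∞ := fun k x => (ball (c k) (ρ k)).indicator (fun _ => (1:ℝ≥0∞)) x with hχ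
  have hχmeas : ∀ k, Measurable (χ k) := fun k =>
    measurable_const.indicator measurableSet_ball
  have hpt : ∀ x : Pl, (∑' k, b k * χ k x) ^ 2
      = ∑' k, ∑' l, b k * b l * (ball (c k) (ρ k) ∩ ball (c l) (ρ l)).indicator
          (fun _ => (1:ℝ≥0∞)) x := by
    intro x
    rw [sq, ← ENNReal.tsum_mul_right]
    refine tsum_congr fun k => ?_
    rw [← ENNReal.tsum_mul_left]
    refine tsum_congr fun l => ?_
    exact mul_indicator_ball _ _ _ _ x
  calc ∫⁻ x, (∑' k, b k * χ k x) ^ 2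
      = ∫⁻ x, ∑' k, ∑' l, b k * b l * (ball (c k) (ρ k) ∩ ball (c l) (ρ l)).indicator
          (fun _ => (1:ℝ≥0∞)) x := lintegral_congr hpt
    _ = ∑' k, ∫⁻ x, ∑' l, b k * b l * (ball (c k) (ρ k) ∩ ball (c l) (ρ l)).indicator
          (fun _ => (1:ℝ≥0∞)) x := by
        refine lintegral_tsum fun k => Measurable.aemeasurable ?_
        exact Measurable.ennreal_tsum fun l =>
          (measurable_const.indicator (measurableSet_ball.inter measurableSet_ball)).const_mul _
    _ = ∑' k, ∑' l, ∫⁻ x, b k * b l * (ball (c k) (ρ k) ∩ ball (c l) (ρ l)).indicator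
          (fun _ => (1:ℝ≥0∞)) x := by
        refine tsum_congr fun k => ?_
        refine lintegral_tsum fun l => Measurable.aemeasurable ?_
        exact (measurable_const.indicator (measurableSet_ball.inter measurableSet_ball)).const_mul _
    _ = ∑' k, ∑' l, b k * b l * volume (ball (c k) (ρ k) ∩ ball (c l) (ρ l)) := by
        refine tsum_congr fun k => tsum_congr fun l => ?_
        rw [lintegral_const_mul _ (measurable_const.indicator
          (measurableSet_ball.inter measurableSet_ball)),
          ]
        congr 1
        rw [lintegral_indicator (measurableSet_ball.inter measurableSet_ball), setLIntegral_one]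

lemma expand_disjoint {I : Type} [Countable I] (c : I → Pl) (r : I → ℝ) (b : I → ℝ≥0∞)
    (hdisj : Pairwise fun k l => Disjoint (ball (c k) (r k)) (ball (c l) (r l))) :
    ∫⁻ x, (∑' k, b k * (ball (c k) (r k)).indicator (fun _ => (1:ℝ≥0∞)) x) ^ 2
      = ∑' k, (b k) ^ 2 * volume (ball (c k) (r k)) := by
  rw [expand]
  refine tsum_congr fun k => ?_
  rw [tsum_eq_single k ?_]
  · rw [Set.inter_self, sq]
  · intro l hlk
    have : ball (c k) (r k) ∩ ball (c l) (r l) = ∅ :=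
      Set.disjoint_iff_inter_eq_empty.mp (hdisj hlk.symm)
    rw [this, measure_empty, mul_zero]


lemma expand_finset {I : Type} (c : I → Pl) (ρ : I → ℝ) (b : I → ℝ≥0∞) (S : Finset I) :
    ∫⁻ x, (∑ k ∈ S, b k * (ball (c k) (ρ k)).indicator (fun _ => (1:ℝ≥0∞)) x) ^ 2
      = ∑ p ∈ S ×ˢ S, b p.1 * b p.2 * volume (ball (c p.1) (ρ p.1) ∩ ball (c p.2) (ρ p.2)) := by
  have hpt : ∀ x : Pl, (∑ k ∈ S, b k * (ball (c k) (ρ k)).indicator (fun _ => (1:ℝ≥0∞)) x) ^ 2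
      = ∑ p ∈ S ×ˢ S, b p.1 * b p.2 * (ball (c p.1) (ρ p.1) ∩ ball (c p.2) (ρ p.2)).indicator
          (fun _ => (1:ℝ≥0∞)) x := by
    intro x
    rw [sq, Finset.sum_mul_sum, Finset.sum_product]
    exact Finset.sum_congr rfl fun k _ => Finset.sum_congr rfl fun l _ =>
      mul_indicator_ball _ _ _ _ x
  rw [lintegral_congr hpt,
    lintegral_finset_sum' _ fun p _ => (Measurable.aemeasurable (by
      exact (measurable_const.indicator
        (measurableSet_ball.inter measurableSet_ball)).const_mul _))]
  refine Finset.sum_congr rfl fun p _ => ?_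
  rw [lintegral_const_mul _ (measurable_const.indicator
    (measurableSet_ball.inter measurableSet_ball))]
  congr 1
  rw [lintegral_indicator (measurableSet_ball.inter measurableSet_ball), setLIntegral_one]


lemma core {I : Type} (c : I → Pl) (r : I → ℝ) (b : I → ℝ≥0∞) (hb : ∀ k, b k ≠ ⊤)
    (lam : ℝ) (hlam : 1 ≤ lam) (hr : ∀ k, 0 < r k)
    (hdisj : Pairwise fun k l => Disjoint (ball (c k) (r k)) (ball (c l) (r l)))
    (S : Finset I) :
    ∫⁻ x, (∑ k ∈ S, b k * (ball (c k) (lam * r k)).indicator (fun _ => (1:ℝ≥0∞)) x) ^ 2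
      ≤ 512 * ENNReal.ofReal (lam ^ 2) ^ 2 * ∑ k ∈ S, (b k) ^ 2 * volume (ball (c k) (r k)) := by
  classical
  have hlam0 : (0:ℝ) < lam := lt_of_lt_of_le one_pos hlam
  set ρ : I → ℝ := fun k => lam * r k with hρdef
  have hρpos : ∀ k, 0 < ρ k := fun k => by
    have := hr k
    show 0 < lam * r k
    positivity
  have hrρ : ∀ k, r k ≤ ρ k := fun k =>
    le_mul_of_one_le_left (hr k).le hlam
  set w : I → ℝ≥0∞ := fun k => volume (ball (c k) (r k)) with hw
  set m : I → ℝ≥0∞ := fun k => volume (ball (c k) (ρ k)) with hm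
  have hw0 : ∀ k, w k ≠ 0 := fun k => (measure_ball_pos volume (c k) (hr k)).ne'
  have hwtop : ∀ k, w k ≠ ⊤ := fun k => measure_ball_lt_top.ne
  have hm0 : ∀ k, m k ≠ 0 := fun k => (measure_ball_pos volume (c k) (hρpos k)).ne'
  have hmtop : ∀ k, m k ≠ ⊤ := fun k => measure_ball_lt_top.ne
  set L : ℝ≥0∞ := ENNReal.ofReal (lam ^ 2) with hL
  have hL0 : L ≠ 0 := by
    simp only [hL, ne_eq, ENNReal.ofReal_eq_zero, not_le]; positivity
  have hLtop : L ≠ ⊤ := ENNReal.ofReal_ne_top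
  have hmLw : ∀ k, m k = L * w k := by
    intro k
    show volume (ball (c k) (lam * r k))
      = ENNReal.ofReal (lam ^ 2) * volume (ball (c k) (r k))
    rw [vol_ball _ (mul_nonneg hlam0.le (hr k).le), vol_ball _ (hr k).le, mul_pow,
      ENNReal.ofReal_mul (by positivity), mul_assoc]
  set χ : I → Pl → ℝ≥0∞ := fun k x => (ball (c k) (ρ k)).indicator (fun _ => (1:ℝ≥0∞)) x with hχ
  have hχmeas : ∀ k, Measurable (χ k) := fun k => measurable_const.indicator measurableSet_ball
  set F : Pl → ℝ≥0∞ := fun x => ∑ k ∈ S, b k * χ k x with hF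
  have hFx : ∀ x, F x = ∑ k ∈ S, b k * χ k x := fun x => by rw [hF]
  have hFmeas : Measurable F := by
    apply Finset.measurable_sum
    exact fun k _ => (hχmeas k).const_mul _
  set Φ : ℝ≥0∞ := ∫⁻ x, (F x) ^ 2 with hΦ
  set A : I → ℝ≥0∞ := fun k => ∫⁻ x in ball (c k) (ρ k), F x with hA
  -- finiteness of Φ
  have hΦtop : Φ ≠ ⊤ := by
    have hbd : ∀ x : Pl, (F x) ^ 2 ≤ (⋃ k ∈ S, ball (c k) (ρ k)).indicator
        (fun _ => (∑ k ∈ S, b k) ^ 2) x := by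
      intro x
      by_cases hx : x ∈ ⋃ k ∈ S, ball (c k) (ρ k)
      · rw [Set.indicator_of_mem hx]
        refine pow_le_pow_left₀ (by positivity) ?_ 2
        rw [hFx x]
        refine Finset.sum_le_sum fun k _ => ?_
        have hχle : χ k x ≤ 1 :=
          Set.indicator_apply_le' (fun _ => le_rfl) (fun _ => zero_le_one)
        calc b k * χ k x ≤ b k * 1 := mul_le_mul_right hχle (b k)
          _ = b k := mul_one _
      · rw [Set.indicator_of_notMem hx]
        have hF0 : F x = 0 := by
          rw [hFx x]
          refine Finset.sum_eq_zero fun k hk => ?_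
          have hxk : x ∉ ball (c k) (ρ k) := fun hxk =>
            hx (Set.mem_biUnion hk hxk)
          have h0 : χ k x = 0 := Set.indicator_of_notMem hxk _
          rw [h0, mul_zero]
        rw [hF0]; simp
    have : Φ ≤ (∑ k ∈ S, b k) ^ 2 * volume (⋃ k ∈ S, ball (c k) (ρ k)) := by
      rw [hΦ]
      calc ∫⁻ x, (F x) ^ 2 ≤ ∫⁻ x, (⋃ k ∈ S, ball (c k) (ρ k)).indicator
            (fun _ => (∑ k ∈ S, b k) ^ 2) x := lintegral_mono hbd
        _ = (∑ k ∈ S, b k) ^ 2 * volume (⋃ k ∈ S, ball (c k) (ρ k)) := by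
            rw [lintegral_indicator (S.measurableSet_biUnion fun k _ => measurableSet_ball),
              setLIntegral_const]
    refine ne_top_of_le_ne_top ?_ this
    refine ENNReal.mul_ne_top (ENNReal.pow_ne_top ?_) ?_
    · exact (ENNReal.sum_lt_top.mpr fun k _ => (hb k).lt_top).ne
    · exact ne_top_of_le_ne_top (ENNReal.sum_lt_top.mpr fun k _ =>
        measure_ball_lt_top).ne (measure_biUnion_finset_le S _)
  -- Step A : Φ = ∑ b k * A k
  have stepA : Φ = ∑ k ∈ S, b k * A k := by
    rw [hΦ]
    have hptw : ∀ x, (F x) ^ 2 = ∑ k ∈ S, b k * ((ball (c k) (ρ k)).indicator F x) := by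
      intro x
      rw [sq]
      nth_rewrite 1 [hFx x]
      rw [Finset.sum_mul]
      refine Finset.sum_congr rfl fun k _ => ?_
      rw [mul_assoc]
      congr 1
      by_cases hx : x ∈ ball (c k) (ρ k)
      · have h1 : χ k x = 1 := Set.indicator_of_mem hx _
        rw [h1, Set.indicator_of_mem hx, one_mul]
      · have h1 : χ k x = 0 := Set.indicator_of_notMem hx _
        rw [h1, Set.indicator_of_notMem hx, zero_mul]
    rw [lintegral_congr hptw,
      lintegral_finset_sum' S fun k _ =>
        ((hFmeas.indicator measurableSet_ball).const_mul _).aemeasurable]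
    refine Finset.sum_congr rfl fun k _ => ?_
    rw [lintegral_const_mul _ (hFmeas.indicator measurableSet_ball),
      lintegral_indicator measurableSet_ball]
  -- Step B : Cauchy-Schwarz
  set u : I → ℝ≥0∞ := fun k => (w k) ^ (1/2 : ℝ) with hu
  have hu0 : ∀ k, u k ≠ 0 := fun k => by
    simp only [hu, ne_eq, ENNReal.rpow_eq_zero_iff, not_or]
    constructor
    · rintro ⟨h1, -⟩; exact hw0 k h1
    · rintro ⟨h1, -⟩; exact hwtop k h1
  have hutop : ∀ k, u k ≠ ⊤ := fun k => by
    simp only [hu, ne_eq, ENNReal.rpow_eq_top_iff, not_or]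
    constructor
    · rintro ⟨h1, -⟩; exact hw0 k h1
    · rintro ⟨h1, -⟩; exact hwtop k h1
  have husq : ∀ k, (u k) ^ 2 = w k := fun k => by
    rw [hu]
    show ((w k) ^ (1/2:ℝ)) ^ (2:ℕ) = w k
    rw [← ENNReal.rpow_natCast ((w k) ^ (1/2:ℝ)) 2, ← ENNReal.rpow_mul]
    norm_num
  have stepB : Φ ≤ (∑ k ∈ S, (b k) ^ 2 * w k) ^ (1/2:ℝ)
      * (∑ k ∈ S, (A k) ^ 2 * ((u k) ^ 2)⁻¹) ^ (1/2:ℝ) := by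
    rw [stepA]
    have hterm : ∀ k ∈ S, b k * A k = (b k * u k) * (A k * (u k)⁻¹) := by
      intro k _
      have h1 : u k * (u k)⁻¹ = 1 := ENNReal.mul_inv_cancel (hu0 k) (hutop k)
      calc b k * A k = b k * A k * (u k * (u k)⁻¹) := by rw [h1, mul_one]
        _ = (b k * u k) * (A k * (u k)⁻¹) := by ring
    rw [Finset.sum_congr rfl hterm]
    refine le_trans (enn_cs S _ _) ?_
    refine mul_le_mul' ?_ ?_
    · refine ENNReal.rpow_le_rpow ?_ (by norm_num)
      refine le_of_eq (Finset.sum_congr rfl fun k _ => ?_)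
      rw [mul_pow, husq]
    · refine ENNReal.rpow_le_rpow ?_ (by norm_num)
      refine le_of_eq (Finset.sum_congr rfl fun k _ => ?_)
      rw [mul_pow, ENNReal.inv_pow]
  -- Step C : maximal function bound
  have stepC : ∑ k ∈ S, (A k) ^ 2 * ((u k) ^ 2)⁻¹ ≤ L ^ 2 * (512 * Φ) := by
    have hterm : ∀ k ∈ S, (A k) ^ 2 * ((u k) ^ 2)⁻¹
        = L ^ 2 * (w k * (A k / m k) ^ 2) := by
      intro k _
      have hAc : A k = (A k / m k) * m k :=
        (ENNReal.div_mul_cancel (hm0 k) (hmtop k)).symm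
      have h2 : w k * (w k)⁻¹ = 1 := ENNReal.mul_inv_cancel (hw0 k) (hwtop k)
      rw [husq]
      calc (A k) ^ 2 * (w k)⁻¹ = ((A k / m k) * m k) ^ 2 * (w k)⁻¹ := by rw [← hAc]
        _ = (A k / m k) ^ 2 * (L ^ 2 * (w k) ^ 2) * (w k)⁻¹ := by
            rw [mul_pow, hmLw k, mul_pow]
        _ = L ^ 2 * (w k * (A k / m k) ^ 2) * (w k * (w k)⁻¹) := by ring
        _ = L ^ 2 * (w k * (A k / m k) ^ 2) := by rw [h2, mul_one]
    rw [Finset.sum_congr rfl hterm, ← Finset.mul_sum]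
    refine mul_le_mul_right ?_ (L ^ 2)
    exact maximal c r ρ hr hrρ hdisj S F hFmeas
  -- assemble
  have final : Φ ≤ 512 * L ^ 2 * ∑ k ∈ S, (b k) ^ 2 * w k := by
    set Y : ℝ≥0∞ := ∑ k ∈ S, (b k) ^ 2 * w k with hY
    set K : ℝ≥0∞ := 512 * L ^ 2 * Y with hK
    rcases eq_or_ne Φ 0 with h0 | hΦ0
    · rw [h0]; exact bot_le
    have hYK : Φ ≤ K ^ (1/2:ℝ) * Φ ^ (1/2:ℝ) := by
      calc Φ ≤ Y ^ (1/2:ℝ) * (∑ k ∈ S, (A k) ^ 2 * ((u k) ^ 2)⁻¹) ^ (1/2:ℝ) := stepB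
        _ ≤ Y ^ (1/2:ℝ) * (L ^ 2 * (512 * Φ)) ^ (1/2:ℝ) := by
            exact mul_le_mul_right (ENNReal.rpow_le_rpow stepC (by norm_num)) _
        _ = K ^ (1/2:ℝ) * Φ ^ (1/2:ℝ) := by
            rw [hK, ← ENNReal.mul_rpow_of_nonneg _ _ (by norm_num : (0:ℝ) ≤ 1/2),
              ← ENNReal.mul_rpow_of_nonneg _ _ (by norm_num : (0:ℝ) ≤ 1/2)]
            congr 1
            ring
    have hsqrt : Φ ^ (1/2:ℝ) ≤ K ^ (1/2:ℝ) := by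
      have hΦsplit : Φ = Φ ^ (1/2:ℝ) * Φ ^ (1/2:ℝ) := by
        rw [← ENNReal.rpow_add _ _ hΦ0 hΦtop]
        norm_num
      have h2 : Φ ^ (1/2:ℝ) * Φ ^ (1/2:ℝ) ≤ K ^ (1/2:ℝ) * Φ ^ (1/2:ℝ) := by
        rw [← hΦsplit]; exact hYK
      exact (ENNReal.mul_le_mul_iff_left
        (by simp [ENNReal.rpow_eq_zero_iff, hΦ0, hΦtop])
        (ENNReal.rpow_ne_top_of_nonneg (by norm_num) hΦtop)).mp h2
    calc Φ = (Φ ^ (1/2:ℝ)) ^ 2 := by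
          rw [← ENNReal.rpow_natCast (Φ ^ (1/2:ℝ)) 2, ← ENNReal.rpow_mul]
          norm_num
      _ ≤ (K ^ (1/2:ℝ)) ^ 2 := pow_le_pow_left₀ (by positivity) hsqrt 2
      _ = K := by
          rw [← ENNReal.rpow_natCast (K ^ (1/2:ℝ)) 2, ← ENNReal.rpow_mul]
          norm_num
  exact final


end BojarskiAux

open BojarskiAux in
/-- Bojarski's lemma: for each `λ ≥ 1` there is a constant `C` depending only on `λ` such that
for every finite or countable collection of pairwise disjoint balls `B k` in `ℝ²` and
nonnegative reals `a k`, `‖Σ a k χ_{λ B k}‖_{L²} ≤ C ‖Σ a k χ_{B k}‖_{L²}`. -/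
theorem stmt_4 (lam : ℝ) (hlam : 1 ≤ lam) :
    ∃ C : NNReal, ∀ (I : Type) [Countable I],
      ∀ (c : I → EuclideanSpace ℝ (Fin 2)) (r : I → ℝ) (a : I → ℝ),
      (∀ k, 0 < r k) → (∀ k, 0 ≤ a k) →
      (Pairwise fun k l => Disjoint (Metric.ball (c k) (r k)) (Metric.ball (c l) (r l))) →
      eLpNorm (fun x => ∑' k : I,
          a k * (Metric.ball (c k) (lam * r k)).indicator (fun _ => (1 : ℝ)) x) 2 volume ≤
        C * eLpNorm (fun x => ∑' k : I,
          a k * (Metric.ball (c k) (r k)).indicator (fun _ => (1 : ℝ)) x) 2 volume := by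
  classical
  have hlam0 : (0:ℝ) < lam := lt_of_lt_of_le one_pos hlam
  refine ⟨23 * lam.toNNReal ^ 2, ?_⟩
  intro I _ c r a hr ha hdisj
  set b : I → ℝ≥0∞ := fun k => ENNReal.ofReal (a k) with hb
  have hbtop : ∀ k, b k ≠ ⊤ := fun _ => ENNReal.ofReal_ne_top
  set L : ℝ≥0∞ := ENNReal.ofReal (lam ^ 2) with hL
  have hLtop : L ≠ ⊤ := ENNReal.ofReal_ne_top
  set Fbig : Pl → ℝ≥0∞ :=
    fun x => ∑' k, b k * (ball (c k) (lam * r k)).indicator (fun _ => (1:ℝ≥0∞)) x with hFbig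
  set G : Pl → ℝ≥0∞ :=
    fun x => ∑' k, b k * (ball (c k) (r k)).indicator (fun _ => (1:ℝ≥0∞)) x with hG
  -- the main quantitative bound
  have hcore : ∫⁻ x, (Fbig x) ^ 2 ≤ 512 * L ^ 2 * ∫⁻ x, (G x) ^ 2 := by
    rw [hFbig, hG, expand c (fun k => lam * r k) b, expand_disjoint c r b hdisj,
      ← ENNReal.tsum_prod' (f := fun p : I × I => b p.1 * b p.2 *
        volume (ball (c p.1) (lam * r p.1) ∩ ball (c p.2) (lam * r p.2))),
      ENNReal.tsum_eq_iSup_sum]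
    refine iSup_le fun P => ?_
    set S : Finset I := P.image Prod.fst ∪ P.image Prod.snd with hS
    have hPS : P ⊆ S ×ˢ S := by
      intro p hp
      rw [Finset.mem_product]
      constructor
      · exact Finset.mem_union_left _ (Finset.mem_image_of_mem Prod.fst hp)
      · exact Finset.mem_union_right _ (Finset.mem_image_of_mem Prod.snd hp)
    calc ∑ p ∈ P, b p.1 * b p.2 *
          volume (ball (c p.1) (lam * r p.1) ∩ ball (c p.2) (lam * r p.2))
        ≤ ∑ p ∈ S ×ˢ S, b p.1 * b p.2 *
          volume (ball (c p.1) (lam * r p.1) ∩ ball (c p.2) (lam * r p.2)) :=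
          Finset.sum_le_sum_of_subset hPS
      _ = ∫⁻ x, (∑ k ∈ S, b k * (ball (c k) (lam * r k)).indicator (fun _ => (1:ℝ≥0∞)) x) ^ 2 :=
          (expand_finset c (fun k => lam * r k) b S).symm
      _ ≤ 512 * L ^ 2 * ∑ k ∈ S, (b k) ^ 2 * volume (ball (c k) (r k)) :=
          core c r b hbtop lam hlam hr hdisj S
      _ ≤ 512 * L ^ 2 * ∑' k, (b k) ^ 2 * volume (ball (c k) (r k)) :=
          mul_le_mul_right (ENNReal.sum_le_tsum S) _
  -- LHS bound
  have hLHS : eLpNorm (fun x => ∑' k : I,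
      a k * (Metric.ball (c k) (lam * r k)).indicator (fun _ => (1 : ℝ)) x) 2 volume
      ≤ (∫⁻ x, (Fbig x) ^ 2) ^ (1/2 : ℝ) := by
    rw [eLpNorm_eq_lintegral_rpow_enorm_toReal (by norm_num) (by norm_num)]
    simp only [ENNReal.toReal_ofNat]
    refine ENNReal.rpow_le_rpow ?_ (by norm_num)
    refine lintegral_mono fun x => ?_
    rw [ENNReal.rpow_two]
    refine pow_le_pow_left' ?_ 2
    set t : I → ℝ := fun k => a k * (ball (c k) (lam * r k)).indicator (fun _ => (1 : ℝ)) x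
      with ht
    have htnonneg : ∀ k, 0 ≤ t k := by
      intro k
      refine mul_nonneg (ha k) ?_
      exact Set.indicator_nonneg (fun _ _ => zero_le_one) x
    by_cases hsum : Summable t
    · have h0 : 0 ≤ ∑' k, t k := tsum_nonneg htnonneg
      calc (‖∑' k, t k‖₊ : ℝ≥0∞) = ENNReal.ofReal (∑' k, t k) := by
            rw [← Real.enorm_eq_ofReal h0]; rfl
        _ = ∑' k, ENNReal.ofReal (t k) := ENNReal.ofReal_tsum_of_nonneg htnonneg hsum
        _ = Fbig x := by
            simp only [hFbig]
            refine tsum_congr fun k => ?_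
            simp only [ht]
            by_cases hx : x ∈ ball (c k) (lam * r k)
            · rw [Set.indicator_of_mem hx, Set.indicator_of_mem hx, mul_one, mul_one]
            · rw [Set.indicator_of_notMem hx, Set.indicator_of_notMem hx, mul_zero,
                mul_zero, ENNReal.ofReal_zero]
        _ ≤ Fbig x := le_rfl
    · rw [tsum_eq_zero_of_not_summable hsum]
      simp
  -- RHS computation
  have hRHS : eLpNorm (fun x => ∑' k : I,
      a k * (Metric.ball (c k) (r k)).indicator (fun _ => (1 : ℝ)) x) 2 volume
      = (∫⁻ x, (G x) ^ 2) ^ (1/2 : ℝ) := by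
    rw [eLpNorm_eq_lintegral_rpow_enorm_toReal (by norm_num) (by norm_num)]
    simp only [ENNReal.toReal_ofNat]
    congr 1
    refine lintegral_congr fun x => ?_
    rw [ENNReal.rpow_two]
    congr 1
    set t : I → ℝ := fun k => a k * (ball (c k) (r k)).indicator (fun _ => (1 : ℝ)) x with ht
    by_cases hx : ∃ k₀, x ∈ ball (c k₀) (r k₀)
    · obtain ⟨k₀, hk₀⟩ := hx
      have hzero : ∀ k ≠ k₀, t k = 0 := by
        intro k hk
        have hxk : x ∉ ball (c k) (r k) := by
          intro hxk
          exact hk (Classical.by_contradiction fun hne =>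
            Set.disjoint_left.mp (hdisj hne) hxk hk₀)
        simp only [ht]
        rw [Set.indicator_of_notMem hxk, mul_zero]
      have hzero' : ∀ k ≠ k₀, b k * (ball (c k) (r k)).indicator (fun _ => (1:ℝ≥0∞)) x = 0 := by
        intro k hk
        have hxk : x ∉ ball (c k) (r k) := by
          intro hxk
          exact hk (Classical.by_contradiction fun hne =>
            Set.disjoint_left.mp (hdisj hne) hxk hk₀)
        rw [Set.indicator_of_notMem hxk, mul_zero]
      have hGx : G x = b k₀ * (ball (c k₀) (r k₀)).indicator (fun _ => (1:ℝ≥0∞)) x := by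
        simp only [hG]
        exact tsum_eq_single k₀ hzero'
      rw [tsum_eq_single k₀ hzero, hGx]
      simp only [ht]
      rw [Set.indicator_of_mem hk₀, Set.indicator_of_mem hk₀, mul_one, mul_one]
      exact Real.enorm_eq_ofReal (ha k₀)
    · push_neg at hx
      have h1 : ∀ k, t k = 0 := by
        intro k
        rw [ht]; simp only []
        rw [Set.indicator_of_notMem (hx k), mul_zero]
      have h2 : ∀ k, b k * (ball (c k) (r k)).indicator (fun _ => (1:ℝ≥0∞)) x = 0 := by
        intro k
        rw [Set.indicator_of_notMem (hx k), mul_zero]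
      have hG0 : G x = 0 := by
        simp only [hG]
        exact (tsum_congr h2).trans tsum_zero
      rw [show t = fun _ => (0:ℝ) from funext h1, tsum_zero, hG0]
      simp
  -- final constant computation
  have hCL : ((23 * lam.toNNReal ^ 2 : ℝ≥0) : ℝ≥0∞) = 23 * L := by
    have h1 : ENNReal.ofReal lam = (lam.toNNReal : ℝ≥0∞) := rfl
    rw [ENNReal.coe_mul, ENNReal.coe_pow, hL, ENNReal.ofReal_pow hlam0.le, h1]
    norm_num
  have h512 : (512 : ℝ≥0∞) ^ (1/2 : ℝ) ≤ 23 := by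
    have h23 : (23:ℝ≥0∞) = ((23:ℝ≥0∞) ^ (2:ℕ)) ^ (1/2:ℝ) := by
      rw [← ENNReal.rpow_natCast _ 2, ← ENNReal.rpow_mul]
      norm_num
    rw [h23]
    refine ENNReal.rpow_le_rpow ?_ (by norm_num)
    norm_num
  calc eLpNorm (fun x => ∑' k : I,
        a k * (Metric.ball (c k) (lam * r k)).indicator (fun _ => (1 : ℝ)) x) 2 volume
      ≤ (∫⁻ x, (Fbig x) ^ 2) ^ (1/2 : ℝ) := hLHS
    _ ≤ (512 * L ^ 2 * ∫⁻ x, (G x) ^ 2) ^ (1/2 : ℝ) :=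
        ENNReal.rpow_le_rpow hcore (by norm_num)
    _ = (512 : ℝ≥0∞) ^ (1/2:ℝ) * (L ^ 2) ^ (1/2:ℝ) * ((∫⁻ x, (G x) ^ 2) ^ (1/2:ℝ)) := by
        rw [ENNReal.mul_rpow_of_nonneg _ _ (by norm_num : (0:ℝ) ≤ 1/2),
          ENNReal.mul_rpow_of_nonneg _ _ (by norm_num : (0:ℝ) ≤ 1/2)]
    _ ≤ 23 * L * ((∫⁻ x, (G x) ^ 2) ^ (1/2:ℝ)) := by
        have hLsq : (L ^ 2) ^ (1/2:ℝ) = L := by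
          rw [← ENNReal.rpow_natCast L 2, ← ENNReal.rpow_mul]
          norm_num
        rw [hLsq]
        exact mul_le_mul_left (mul_le_mul_left h512 L) _
    _ = ↑(23 * lam.toNNReal ^ 2 : ℝ≥0) * eLpNorm (fun x => ∑' k : I,
          a k * (Metric.ball (c k) (r k)).indicator (fun _ => (1 : ℝ)) x) 2 volume := by
        rw [hCL, hRHS]


end BojarskiProof
end

section
/- Let Ω and Ω' be compact subsets of ℝ² with closed ball conditions: B̄(0,1) ⊆ Ω ⊆ B̄(0,C) and B̄(p', r') ⊆ Ω' ⊆ B̄(p', C r') for some C ≥ 1, p' ∈ ℝ², r' > 0. If Ω' = A(Ω) for an invertible linear map A : ℝ² → ℝ², then the dilatation of A, i.e., the ratio of the largest to smallest singular value of A, is bounded above by a constant depending only on C. -/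
/-- If `B̄(0,1) ⊆ Ω ⊆ B̄(0,C)` and `B̄(p',r') ⊆ Ω' ⊆ B̄(p', C r')` are compact subsets of `ℝ²`
with `Ω' = A(Ω)` for an invertible linear map `A`, then the dilatation of `A` (the ratio of
its largest to smallest singular value) is bounded above by a constant depending only
on `C`. -/
theorem stmt_11 (C : ℝ) (hC : 1 ≤ C) :
    ∃ K : ℝ, ∀ (Ω Ω' : Set (EuclideanSpace ℝ (Fin 2)))
      (A : EuclideanSpace ℝ (Fin 2) ≃ₗ[ℝ] EuclideanSpace ℝ (Fin 2))
      (p' : EuclideanSpace ℝ (Fin 2)) (r' : ℝ),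
      IsCompact Ω → IsCompact Ω' → 0 < r' →
      Metric.closedBall 0 1 ⊆ Ω → Ω ⊆ Metric.closedBall 0 C →
      Metric.closedBall p' r' ⊆ Ω' → Ω' ⊆ Metric.closedBall p' (C * r') →
      Ω' = ⇑A '' Ω →
      sSup {x : ℝ | ∃ v : EuclideanSpace ℝ (Fin 2), ‖v‖ = 1 ∧ x = ‖A v‖} /
        sInf {x : ℝ | ∃ v : EuclideanSpace ℝ (Fin 2), ‖v‖ = 1 ∧ x = ‖A v‖} ≤ K := by
  have hC0 : (0:ℝ) < C := lt_of_lt_of_le one_pos hC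
  refine ⟨C * C, ?_⟩
  intro Ω Ω' A p' r' _ _ hr' h1 h2 h3 h4 himg
  set S : Set ℝ := {x : ℝ | ∃ v : EuclideanSpace ℝ (Fin 2), ‖v‖ = 1 ∧ x = ‖A v‖} with hS
  have hne : S.Nonempty := by
    refine ⟨‖A (EuclideanSpace.single 0 1)‖, EuclideanSpace.single 0 1, ?_, rfl⟩
    simp [EuclideanSpace.norm_single]
  have hmemΩ : ∀ v : EuclideanSpace ℝ (Fin 2), ‖v‖ = 1 → v ∈ Ω := by
    intro v hv
    apply h1
    simp [Metric.mem_closedBall, dist_zero_right, hv]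
  have hub : ∀ x ∈ S, x ≤ C * r' := by
    rintro x ⟨v, hv, rfl⟩
    have h₁ : ‖A v - p'‖ ≤ C * r' := by
      have : A v ∈ Ω' := himg ▸ ⟨v, hmemΩ v hv, rfl⟩
      simpa [dist_eq_norm] using h4 this
    have h₂ : ‖A (-v) - p'‖ ≤ C * r' := by
      have : A (-v) ∈ Ω' := himg ▸ ⟨-v, hmemΩ (-v) (by simpa using hv), rfl⟩
      simpa [dist_eq_norm] using h4 this
    have key : (A v - p') - (A (-v) - p') = (2:ℝ) • A v := by
      rw [map_neg]; module
    have h3' : ‖(2:ℝ) • A v‖ ≤ 2 * (C * r') := by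
      rw [← key]
      calc ‖(A v - p') - (A (-v) - p')‖ ≤ ‖A v - p'‖ + ‖A (-v) - p'‖ := norm_sub_le _ _
        _ ≤ 2 * (C * r') := by linarith
    rw [norm_smul] at h3'
    simp only [Real.norm_ofNat] at h3'
    linarith
  have hlb : ∀ x ∈ S, r' / C ≤ x := by
    rintro x ⟨v, hv, rfl⟩
    have hv0 : v ≠ 0 := by intro h; rw [h] at hv; simp at hv
    have hAv0 : A v ≠ 0 := fun h => hv0 (by simpa using A.injective (by simpa using h))
    have hAvn : (0:ℝ) < ‖A v‖ := norm_pos_iff.mpr hAv0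
    set u : EuclideanSpace ℝ (Fin 2) := ‖A v‖⁻¹ • A v with hu
    have hun : ‖u‖ = 1 := by
      rw [hu, norm_smul, norm_inv, norm_norm, inv_mul_cancel₀ (ne_of_gt hAvn)]
    have hp : ∀ s : ℝ, |s| = r' → p' + s • u ∈ ⇑A '' Ω := by
      intro s hs
      rw [← himg]
      apply h3
      simp [Metric.mem_closedBall, dist_eq_norm, norm_smul, hun, hs, le_refl]
    obtain ⟨a, haΩ, ha⟩ := hp r' (abs_of_pos hr')
    obtain ⟨b, hbΩ, hb⟩ := hp (-r') (by rw [abs_neg, abs_of_pos hr'])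
    have hanorm : ‖a‖ ≤ C := by simpa [dist_zero_right] using h2 haΩ
    have hbnorm : ‖b‖ ≤ C := by simpa [dist_zero_right] using h2 hbΩ
    have hAab : A (a - b) = (2 * r') • u := by
      rw [map_sub, ha, hb]; module
    have hA2 : A ((2 * r' / ‖A v‖) • v) = (2 * r') • u := by
      rw [map_smul, hu, smul_smul]
      congr 1
    have hab : a - b = (2 * r' / ‖A v‖) • v :=
      A.injective (by rw [hAab, hA2])
    have habn : ‖a - b‖ = 2 * r' / ‖A v‖ := by
      rw [hab, norm_smul, hv, mul_one, Real.norm_eq_abs,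
        abs_of_pos (by positivity)]
    have h2C : 2 * r' / ‖A v‖ ≤ 2 * C := by
      rw [← habn]
      calc ‖a - b‖ ≤ ‖a‖ + ‖b‖ := norm_sub_le _ _
        _ ≤ 2 * C := by linarith
    rw [div_le_iff₀ hAvn] at h2C
    rw [div_le_iff₀ hC0]
    nlinarith
  have hsup : sSup S ≤ C * r' := Real.sSup_le hub (by positivity)
  have hinf : r' / C ≤ sInf S := le_csInf hne hlb
  calc sSup S / sInf S ≤ (C * r') / (r' / C) :=
        div_le_div₀ (by positivity) hsup (by positivity) hinf
    _ = C * C := by field_simp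
end
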